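/- arXiv:2510.01689 — 2 statements merged into one kernel-verified Lean document; each statement's English description precedes it below -/
import Mathlib

section
/- Group incentive ratio upper bound for Maximum Nash Welfare: for every coalition size c ≥ 1, the following holds. Let v_1, …, v_n be additive valuations over m divisible goods such that each agent has strictly positive value for at least one good, let C ⊆ [n] with |C| ≤ c, and let v'_C be manipulated additive valuations (each corrupted agent still having strictly positive value for at least one good). Let x be any fractional allocation maximizing Nash welfare for the true profile v, and let x' be any fractional allocation maximizing Nash welfare for the manipulated profile (v'_C, v_{−C}). Then there exists an agent a ∈ C such that v_a(x'_a) ≤ 2·v_a(x_a). -/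
/-- A fractional allocation: nonnegative entries, each good fully allocated. -/
def IsFracAlloc (n m : ℕ) (x : Fin n → Fin m → ℝ) : Prop :=
  (∀ a g, 0 ≤ x a g) ∧ ∀ g, ∑ a, x a g = 1

/-- The value of the bundle `y` under the additive valuation `v`. -/
noncomputable def addVal {m : ℕ} (v y : Fin m → ℝ) : ℝ := ∑ g, v g * y g

/-- `x` is a fractional allocation maximizing Nash welfare for the profile `v`. -/
def IsMNW (n m : ℕ) (v x : Fin n → Fin m → ℝ) : Prop :=
  IsFracAlloc n m x ∧
    ∀ y : Fin n → Fin m → ℝ, IsFracAlloc n m y →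
      (∏ a, addVal (v a) (y a)) ≤ ∏ a, addVal (v a) (x a)

open Filter Set Topology in
lemma sum_nonpos_of_prod_le {ι : Type*} [Fintype ι] (s : ι → ℝ)
    (h : ∀ t : ℝ, t ∈ Set.Ioc (0:ℝ) 1 → ∏ i, (1 + t * s i) ≤ 1) :
    ∑ i, s i ≤ 0 := by
  classical
  set f : ℝ → ℝ := fun t => ∏ i, (1 + t * s i) with hfdef
  have hf : HasDerivAt f (∑ i, s i) 0 := by
    have h1 : ∀ i ∈ (Finset.univ : Finset ι),
        HasDerivAt (fun t : ℝ => 1 + t * s i) (s i) 0 := by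
      intro i _
      simpa using ((hasDerivAt_mul_const (s i)).const_add 1 : HasDerivAt _ _ (0:ℝ))
    have := HasDerivAt.fun_finsetProd h1
    simpa [f] using this
  have hslope := hasDerivAt_iff_tendsto_slope.mp hf
  have h2 : Tendsto (slope f 0) (𝓝[>] 0) (𝓝 (∑ i, s i)) :=
    hslope.mono_left (nhdsWithin_mono 0 (fun t ht => ne_of_gt ht))
  apply le_of_tendsto h2
  filter_upwards [Ioc_mem_nhdsGT_of_mem (Set.mem_Ico.mpr ⟨le_refl (0:ℝ), one_pos⟩)] with t ht
  have hft : f t ≤ 1 := h t ht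
  have hf0 : f 0 = 1 := by simp [f]
  rw [slope_def_field]
  have : (f t - f 0) / (t - 0) ≤ 0 := by
    apply div_nonpos_of_nonpos_of_nonneg
    · rw [hf0]; linarith
    · linarith [ht.1]
  simpa [slope_def_field] using this

lemma addVal_nonneg {m : ℕ} {v y : Fin m → ℝ} (hv : ∀ g, 0 ≤ v g)
    (hy : ∀ g, 0 ≤ y g) : 0 ≤ addVal v y :=
  Finset.sum_nonneg fun g _ => mul_nonneg (hv g) (hy g)

lemma mnw_pos {n m : ℕ} (hn : 0 < n) {v x : Fin n → Fin m → ℝ}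
    (hv : ∀ a g, 0 ≤ v a g) (hpos : ∀ a, ∃ g, 0 < v a g)
    (hx : IsMNW n m v x) : ∀ a, 0 < addVal (v a) (x a) := by
  classical
  set y : Fin n → Fin m → ℝ := fun _ _ => (n : ℝ)⁻¹ with hy
  have hny : IsFracAlloc n m y := by
    constructor
    · intro a g; positivity
    · intro g
      simp [y, Finset.sum_const, Finset.card_univ]
      field_simp
  have hyval : ∀ a, 0 < addVal (v a) (y a) := by
    intro a
    have : addVal (v a) (y a) = (∑ g, v a g) * (n : ℝ)⁻¹ := by
      simp [addVal, y, Finset.sum_mul]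
    rw [this]
    apply mul_pos _ (by positivity)
    obtain ⟨g, hg⟩ := hpos a
    exact Finset.sum_pos' (fun g _ => hv a g) ⟨g, Finset.mem_univ g, hg⟩
  have hprod : 0 < ∏ a, addVal (v a) (x a) :=
    lt_of_lt_of_le (Finset.prod_pos fun a _ => hyval a) (hx.2 y hny)
  intro a
  rcases lt_or_eq_of_le (addVal_nonneg (hv a) (fun g => hx.1.1 a g)) with h | h
  · exact h
  · exfalso
    have : ∏ a, addVal (v a) (x a) = 0 :=
      Finset.prod_eq_zero (Finset.mem_univ a) h.symm
    rw [this] at hprod; exact lt_irrefl 0 hprod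

lemma foc {n m : ℕ} {v x y : Fin n → Fin m → ℝ}
    (hx : IsMNW n m v x) (hy : IsFracAlloc n m y)
    (hVpos : ∀ a, 0 < addVal (v a) (x a))
    (hW : ∀ a, 0 ≤ addVal (v a) (y a)) :
    ∑ a, addVal (v a) (y a) / addVal (v a) (x a) ≤ n := by
  classical
  set V : Fin n → ℝ := fun a => addVal (v a) (x a)
  set W : Fin n → ℝ := fun a => addVal (v a) (y a)
  have key : ∑ a, (W a / V a - 1) ≤ 0 := by
    apply sum_nonpos_of_prod_le
    intro t ht
    have hz : IsFracAlloc n m (fun a g => (1 - t) * x a g + t * y a g) := by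
      constructor
      · intro a g
        have h1 := hx.1.1 a g; have h2 := hy.1 a g
        show 0 ≤ (1 - t) * x a g + t * y a g
        nlinarith [ht.1, ht.2]
      · intro g
        rw [Finset.sum_add_distrib, ← Finset.mul_sum, ← Finset.mul_sum,
          hx.1.2 g, hy.2 g]
        ring
    have hval : ∀ a, addVal (v a) (fun g => (1 - t) * x a g + t * y a g)
        = (1 - t) * V a + t * W a := by
      intro a
      simp only [addVal, V, W, Finset.mul_sum, ← Finset.sum_add_distrib]
      apply Finset.sum_congr rfl
      intro g _
      ring
    have hle := hx.2 _ hz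
    simp only [hval] at hle
    have hfac : ∀ a : Fin n, 1 + t * (W a / V a - 1) = ((1 - t) * V a + t * W a) / V a := by
      intro a
      have hV0 : V a ≠ 0 := ne_of_gt (hVpos a)
      field_simp
      ring
    calc ∏ a, (1 + t * (W a / V a - 1)) = ∏ a, ((1 - t) * V a + t * W a) / V a := by
          exact Finset.prod_congr rfl fun a _ => hfac a
      _ = (∏ a, ((1 - t) * V a + t * W a)) / ∏ a, V a := by
          rw [Finset.prod_div_distrib]
      _ ≤ 1 := by
          rw [div_le_one (Finset.prod_pos fun a _ => hVpos a)]
          exact hle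
  rw [Finset.sum_sub_distrib, Finset.sum_const, Finset.card_univ, Fintype.card_fin,
    nsmul_eq_mul, mul_one] at key
  linarith

/-- GIR upper bound `2` for Maximum Nash Welfare. -/
theorem stmt2 (c : ℕ) (hc : 1 ≤ c) (n m : ℕ)
    (v v' : Fin n → Fin m → ℝ)
    (hv : ∀ a g, 0 ≤ v a g) (hv' : ∀ a g, 0 ≤ v' a g)
    (hpos : ∀ a, ∃ g, 0 < v a g) (hpos' : ∀ a, ∃ g, 0 < v' a g)
    (C : Finset (Fin n)) (hCne : C.Nonempty) (hC : C.card ≤ c)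
    (hhonest : ∀ a ∉ C, v' a = v a)
    (x x' : Fin n → Fin m → ℝ)
    (hx : IsMNW n m v x) (hx' : IsMNW n m v' x') :
    ∃ a ∈ C, addVal (v a) (x' a) ≤ 2 * addVal (v a) (x a) := by
  classical
  obtain ⟨a0, ha0⟩ := hCne
  have hn : 0 < n := a0.pos
  have hVx : ∀ a, 0 < addVal (v a) (x a) := mnw_pos hn hv hpos hx
  have hVx' : ∀ a, 0 < addVal (v' a) (x' a) := mnw_pos hn hv' hpos' hx'
  have hW1 : ∀ a, 0 ≤ addVal (v a) (x' a) :=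
    fun a => addVal_nonneg (hv a) (fun g => hx'.1.1 a g)
  have hW2 : ∀ a, 0 ≤ addVal (v' a) (x a) :=
    fun a => addVal_nonneg (hv' a) (fun g => hx.1.1 a g)
  have foc1 : ∑ a, addVal (v a) (x' a) / addVal (v a) (x a) ≤ n := foc hx hx'.1 hVx hW1
  have foc2 : ∑ a, addVal (v' a) (x a) / addVal (v' a) (x' a) ≤ n := foc hx' hx.1 hVx' hW2
  set r : Fin n → ℝ := fun a => addVal (v a) (x' a) / addVal (v a) (x a) with hr
  have hsplit1 : ∑ a ∈ C, r a + ∑ a ∈ Cᶜ, r a ≤ n := by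
    rw [Finset.sum_add_sum_compl]; exact foc1
  have hinv : ∑ a ∈ Cᶜ, addVal (v a) (x a) / addVal (v a) (x' a) ≤ n := by
    calc ∑ a ∈ Cᶜ, addVal (v a) (x a) / addVal (v a) (x' a)
        = ∑ a ∈ Cᶜ, addVal (v' a) (x a) / addVal (v' a) (x' a) :=
          Finset.sum_congr rfl (fun a ha => by rw [hhonest a (Finset.mem_compl.mp ha)])
      _ ≤ ∑ a, addVal (v' a) (x a) / addVal (v' a) (x' a) :=
          Finset.sum_le_sum_of_subset_of_nonneg (Finset.subset_univ _)
            (fun a _ _ => div_nonneg (hW2 a) (le_of_lt (hVx' a)))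
      _ ≤ n := foc2
  have hkey : ∀ a ∈ Cᶜ, 2 - addVal (v a) (x a) / addVal (v a) (x' a) ≤ r a := by
    intro a ha
    have ha' := Finset.mem_compl.mp ha
    have hVa := hVx a
    have hWpos : 0 < addVal (v a) (x' a) := by
      have := hVx' a; rwa [hhonest a ha'] at this
    have h2 : 2 ≤ addVal (v a) (x' a) / addVal (v a) (x a)
        + addVal (v a) (x a) / addVal (v a) (x' a) := by
      rw [div_add_div _ _ (ne_of_gt hVa) (ne_of_gt hWpos), le_div_iff₀ (by positivity)]
      nlinarith [sq_nonneg (addVal (v a) (x a) - addVal (v a) (x' a))]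
    simp only [r]
    linarith
  have hcardn : C.card ≤ n := by
    have := Finset.card_le_univ C
    simpa using this
  have hcard : ((Cᶜ : Finset (Fin n)).card : ℝ) = (n : ℝ) - C.card := by
    rw [Finset.card_compl, Fintype.card_fin]
    exact Nat.cast_sub hcardn
  have hsumC' : 2 * ((n : ℝ) - C.card) - n ≤ ∑ a ∈ Cᶜ, r a := by
    have h3 : ∑ a ∈ Cᶜ, (2 - addVal (v a) (x a) / addVal (v a) (x' a)) ≤ ∑ a ∈ Cᶜ, r a :=
      Finset.sum_le_sum hkey
    rw [Finset.sum_sub_distrib, Finset.sum_const, nsmul_eq_mul, hcard] at h3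
    linarith
  have hsumC : ∑ a ∈ C, r a ≤ 2 * (C.card : ℝ) := by linarith
  by_contra hcon
  push_neg at hcon
  have hlt : ∀ a ∈ C, (2 : ℝ) < r a := by
    intro a ha
    have := hcon a ha
    rw [hr]
    rw [lt_div_iff₀ (hVx a)]
    linarith
  have : ∑ a ∈ C, (2 : ℝ) < ∑ a ∈ C, r a :=
    Finset.sum_lt_sum_of_nonempty ⟨a0, ha0⟩ hlt
  rw [Finset.sum_const, nsmul_eq_mul] at this
  linarith
end

section
/- Coupling lemma for Round-Robin on the lifted instance: let ≻ be a profile of strict orderings of n agents over m divisible goods, run the combinatorial implementation of PS on ≻ (terminating after K steps with step lengths t^{(1)}, …, t^{(K)}), and run Round-Robin on the lifted profile ≻' over the set G of T = (n!)^m indivisible copies of each good. For k ∈ [K], define step k of RR(≻') to be the rounds T·Σ_{i=1}^{k−1} t^{(i)} + 1 through T·Σ_{i=1}^{k} t^{(i)} of RR(≻') (each round consisting of n consecutive picks by agents 1, …, n in order). For each agent a ∈ [n] and k ∈ [K], let g_{k,a} denote the unique good with a ∈ N(g_{k,a}, S^{(k−1)}), i.e., the good agent a eats during step k of PS. Then for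 every a ∈ [n] and k ∈ [K], during step k of RR(≻') agent a picks exactly T·t^{(k)} goods, all of which belong to G(g_{k,a}). -/
/-- A strict total ordering over goods, given as a list from most preferred to
least preferred: it must be a duplicate-free enumeration of all goods. -/
def IsOrder {γ : Type*} [Fintype γ] (l : List γ) : Prop :=
  l.Nodup ∧ ∀ g : γ, g ∈ l

/-- An additive valuation `v` (given by its values on single goods) is consistent
with the strict ordering `l` if strictly more valuable goods appear earlier. -/
def Consistent {γ : Type*} [DecidableEq γ] (v : γ → ℝ) (l : List γ) : Prop :=
  ∀ g g' : γ, v g > v g' → l.idxOf g < l.idxOf g'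

/-- State of Round-Robin after `s` stages: the set of remaining goods, together
with the bundle picked so far by each agent.  At stage `s` (0-indexed), agent
`s % n` picks his most preferred remaining good. -/
def rrState {γ : Type*} [DecidableEq γ] [Fintype γ] (n : ℕ) (hn : 0 < n)
    (pref : Fin n → List γ) : ℕ → Finset γ × (Fin n → Finset γ)
  | 0 => (Finset.univ, fun _ => ∅)
  | s + 1 =>
    let st := rrState n hn pref s
    let agent : Fin n := ⟨s % n, Nat.mod_lt s hn⟩
    match (pref agent).find? (fun g => decide (g ∈ st.1)) with
    | none => st
    | some g => (st.1.erase g, Function.update st.2 agent (insert g (st.2 agent)))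

/-- The Round-Robin allocation: the bundle of agent `a` after all goods are picked. -/
def rr {γ : Type*} [DecidableEq γ] [Fintype γ] (n : ℕ) (hn : 0 < n)
    (pref : Fin n → List γ) (a : Fin n) : Finset γ :=
  (rrState n hn pref (Fintype.card γ)).2 a

/-- Agent `a`'s most preferred good in the set `S` of available goods. -/
def psTop {n m : ℕ} (pref : Fin n → List (Fin m)) (S : Finset (Fin m)) (a : Fin n) :
    Option (Fin m) :=
  (pref a).find? (fun g => decide (g ∈ S))

/-- `N(g, S)`: the set of agents whose most preferred available good is `g`. -/
def psN {n m : ℕ} (pref : Fin n → List (Fin m)) (S : Finset (Fin m)) (g : Fin m) :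
    Finset (Fin n) :=
  Finset.univ.filter (fun a => psTop pref S a = some g)

/-- The available goods currently being eaten by at least one agent. -/
def psActive {n m : ℕ} (pref : Fin n → List (Fin m)) (S : Finset (Fin m)) :
    Finset (Fin m) :=
  S.filter (fun g => (psN pref S g).Nonempty)

open scoped Classical in
/-- Combinatorial implementation of Probabilistic Serial.
`psState pref k = (S⁽ᵏ⁾, x⁽ᵏ⁾, t⁽ᵏ⁾)`: after step `k`, the set of available
goods, the partial allocation, and the length `t⁽ᵏ⁾` of step `k` (with `t⁽⁰⁾ = 0`). -/
noncomputable def psState {n m : ℕ} (pref : Fin n → List (Fin m)) :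
    ℕ → Finset (Fin m) × (Fin n → Fin m → ℝ) × ℝ
  | 0 => (Finset.univ, fun _ _ => 0, 0)
  | k + 1 =>
    let st := psState pref k
    let tg : Fin m → ℝ := fun g => (1 - ∑ a, st.2.1 a g) / ((psN pref st.1 g).card : ℝ)
    if h : (psActive pref st.1).Nonempty then
      let t := (psActive pref st.1).inf' h tg
      (st.1.filter (fun g => ¬(g ∈ psActive pref st.1 ∧ tg g = t)),
        fun a g => if psTop pref st.1 a = some g then st.2.1 a g + t else st.2.1 a g,
        t)
    else st

/-- The fractional allocation output by Probabilistic Serial (the mechanism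
terminates after at most `m` steps, since each step fully consumes a good). -/
noncomputable def psAlloc {n m : ℕ} (pref : Fin n → List (Fin m)) :
    Fin n → Fin m → ℝ :=
  (psState pref m).2.1

/-- The lifted ordering over `T` indivisible copies of each of the `m` goods:
copies of a more preferred good come first, and copies of the same good are
ordered by increasing copy index. -/
def liftList {m : ℕ} (T : ℕ) (l : List (Fin m)) : List (Fin m × Fin T) :=
  l.flatMap fun g => (List.finRange T).map fun k => (g, k)


section ListLemmas

lemma aux_find?_before {α : Type*} [DecidableEq α] {p : α → Bool} :
    ∀ {l : List α} {x : α}, l.find? p = some x →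
      ∀ y : α, l.idxOf y < l.idxOf x → p y = false := by
  intro l
  induction l with
  | nil => intro x hx; simp at hx
  | cons h t ih =>
    intro x hx y hy
    by_cases hph : p h
    · rw [List.find?_cons_of_pos hph] at hx
      obtain rfl : h = x := by simpa using hx
      simp [List.idxOf_cons_self] at hy
    · rw [List.find?_cons_of_neg hph] at hx
      by_cases hyh : y = h
      · subst hyh; simpa using hph
      · by_cases hxh : x = h
        · subst hxh
          rw [List.idxOf_cons_self] at hy; omega
        · rw [List.idxOf_cons_ne _ (Ne.symm hyh), List.idxOf_cons_ne _ (Ne.symm hxh)] at hy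
          exact ih hx y (by omega)

lemma aux_find?_range {c T : ℕ} (h : c < T) :
    (List.range T).find? (fun i => decide (c ≤ i)) = some c := by
  induction T with
  | zero => omega
  | succ T ih =>
    rw [List.range_succ, List.find?_append]
    rcases Nat.lt_or_ge c T with h' | h'
    · rw [ih h']; rfl
    · have hc : c = T := by omega
      subst hc
      have : (List.range c).find? (fun i => decide (c ≤ i)) = none := by
        rw [List.find?_eq_none]
        intro x hx
        simp only [List.mem_range] at hx
        simpa using Nat.not_le.mpr hx
      rw [this]
      simp

lemma aux_find?_finRange {c T : ℕ} (h : c < T) :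
    (List.finRange T).find? (fun j : Fin T => decide (c ≤ (j : ℕ))) = some ⟨c, h⟩ := by
  have hmap := List.find?_map (p := fun i => decide (c ≤ i)) (f := Fin.val) (l := List.finRange T)
  have hmr : (List.finRange T).map Fin.val = List.range T := List.ext_getElem (by simp) (by simp)
  rw [hmr, aux_find?_range h] at hmap
  have hc : (fun j : Fin T => decide (c ≤ (j : ℕ))) = ((fun i => decide (c ≤ i)) ∘ Fin.val) := rfl
  rw [hc]
  rcases hfind : (List.finRange T).find? ((fun i => decide (c ≤ i)) ∘ Fin.val) with _ | j
  · rw [hfind] at hmap; simp at hmap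
  · rw [hfind] at hmap
    simp only [Option.map_some] at hmap
    have : (j : ℕ) = c := by simpa using hmap.symm
    congr 1
    exact Fin.ext this

lemma aux_find?_finRange_none {c T : ℕ} (h : T ≤ c) :
    (List.finRange T).find? (fun j : Fin T => decide (c ≤ (j : ℕ))) = none := by
  rw [List.find?_eq_none]
  intro j _
  simp only [decide_eq_true_eq]
  omega

end ListLemmas
section LiftLemmas

variable {m T : ℕ}

lemma aux_find?_lift (cfun : Fin m → ℕ) :
    ∀ (l : List (Fin m)) (g0 : Fin m), g0 ∈ l → ∀ (hlt : cfun g0 < T),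
      (∀ g' ∈ l, l.idxOf g' < l.idxOf g0 → T ≤ cfun g') →
      (liftList T l).find? (fun p => decide (cfun p.1 ≤ (p.2 : ℕ))) =
        some (g0, ⟨cfun g0, hlt⟩) := by
  intro l
  induction l with
  | nil => intro g0 h; simp at h
  | cons h t ih =>
    intro g0 hg0 hlt hbefore
    have hlift : liftList T (h :: t) =
        ((List.finRange T).map fun k => (h, k)) ++ liftList T t := by
      simp [liftList]
    rw [hlift, List.find?_append]
    by_cases hgh : g0 = h
    · subst hgh
      have hfm := List.find?_map (p := fun p : Fin m × Fin T => decide (cfun p.1 ≤ (p.2 : ℕ)))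
        (f := fun k : Fin T => (g0, k)) (l := List.finRange T)
      have hcomp : ((fun p : Fin m × Fin T => decide (cfun p.1 ≤ (p.2 : ℕ))) ∘
          (fun k : Fin T => (g0, k))) = fun j : Fin T => decide (cfun g0 ≤ (j : ℕ)) := rfl
      rw [hcomp, aux_find?_finRange hlt] at hfm
      rw [hfm]
      rfl
    · have hg0t : g0 ∈ t := by
        rcases List.mem_cons.mp hg0 with h' | h'
        · exact absurd h' hgh
        · exact h'
      have hTh : T ≤ cfun h := by
        apply hbefore h List.mem_cons_self
        rw [List.idxOf_cons_self, List.idxOf_cons_ne _ (fun he => hgh he.symm)]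
        omega
      have hnone : ((List.finRange T).map fun k : Fin T => (h, k)).find?
          (fun p => decide (cfun p.1 ≤ (p.2 : ℕ))) = none := by
        rw [List.find?_eq_none]
        intro x hx
        simp only [List.mem_map] at hx
        obtain ⟨k, _, rfl⟩ := hx
        simp only [decide_eq_true_eq, not_le]
        have : (k : ℕ) < T := k.2
        omega
      rw [hnone, Option.none_or]
      apply ih g0 hg0t hlt
      intro g' hg' hidx
      by_cases hg'h : g' = h
      · subst hg'h; exact hTh
      · apply hbefore g' (List.mem_cons_of_mem _ hg')
        rw [List.idxOf_cons_ne _ (fun he => hg'h he.symm),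
          List.idxOf_cons_ne _ (fun he => hgh he.symm)]
        omega

end LiftLemmas
section RRLemmas

variable {γ : Type*} [DecidableEq γ] [Fintype γ] {n : ℕ} (hn : 0 < n) (pref : Fin n → List γ)

lemma aux_rrState_succ_none {s : ℕ}
    (hfind : (pref ⟨s % n, Nat.mod_lt s hn⟩).find?
      (fun g => decide (g ∈ (rrState n hn pref s).1)) = none) :
    rrState n hn pref (s + 1) = rrState n hn pref s := by
  show (match (pref ⟨s % n, Nat.mod_lt s hn⟩).find?
      (fun g => decide (g ∈ (rrState n hn pref s).1)) with
    | none => rrState n hn pref s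
    | some g => ((rrState n hn pref s).1.erase g, _)) = _
  rw [hfind]

lemma aux_rrState_succ_some {s : ℕ} {g : γ}
    (hfind : (pref ⟨s % n, Nat.mod_lt s hn⟩).find?
      (fun g => decide (g ∈ (rrState n hn pref s).1)) = some g) :
    rrState n hn pref (s + 1) =
      ((rrState n hn pref s).1.erase g,
        Function.update (rrState n hn pref s).2 ⟨s % n, Nat.mod_lt s hn⟩
          (insert g ((rrState n hn pref s).2 ⟨s % n, Nat.mod_lt s hn⟩))) := by
  show (match (pref ⟨s % n, Nat.mod_lt s hn⟩).find?
      (fun g => decide (g ∈ (rrState n hn pref s).1)) with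
    | none => rrState n hn pref s
    | some g => ((rrState n hn pref s).1.erase g,
        Function.update (rrState n hn pref s).2 ⟨s % n, Nat.mod_lt s hn⟩
          (insert g ((rrState n hn pref s).2 ⟨s % n, Nat.mod_lt s hn⟩)))) = _
  rw [hfind]

lemma aux_rrState_disjoint (s : ℕ) (a : Fin n) :
    Disjoint ((rrState n hn pref s).2 a) ((rrState n hn pref s).1) := by
  induction s with
  | zero => simp [rrState]
  | succ s ih =>
    rcases hfind : (pref ⟨s % n, Nat.mod_lt s hn⟩).find?
        (fun g => decide (g ∈ (rrState n hn pref s).1)) with _ | g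
    · rw [aux_rrState_succ_none hn pref hfind]; exact ih
    · rw [aux_rrState_succ_some hn pref hfind]
      simp only
      by_cases ha : a = ⟨s % n, Nat.mod_lt s hn⟩
      · subst ha
        rw [Function.update_self]
        refine Finset.disjoint_left.mpr ?_
        intro x hx hx'
        rcases Finset.mem_insert.mp hx with rfl | hx2
        · exact (Finset.notMem_erase x _) hx'
        · exact (Finset.disjoint_left.mp ih hx2) (Finset.mem_of_mem_erase hx')
      · rw [Function.update_of_ne ha]
        exact ih.mono_right (Finset.erase_subset _ _)

lemma aux_rrState_R_antitone {s s' : ℕ} (h : s ≤ s') :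
    (rrState n hn pref s').1 ⊆ (rrState n hn pref s).1 := by
  induction s' with
  | zero => have : s = 0 := by omega
            subst this; exact Finset.Subset.refl _
  | succ s' ih =>
    rcases Nat.lt_or_ge s (s' + 1) with h' | h'
    · have hsub : (rrState n hn pref (s' + 1)).1 ⊆ (rrState n hn pref s').1 := by
        rcases hfind : (pref ⟨s' % n, Nat.mod_lt s' hn⟩).find?
            (fun g => decide (g ∈ (rrState n hn pref s').1)) with _ | g
        · rw [aux_rrState_succ_none hn pref hfind]
        · rw [aux_rrState_succ_some hn pref hfind]
          exact Finset.erase_subset _ _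
      exact hsub.trans (ih (by omega))
    · have : s = s' + 1 := by omega
      subst this; exact Finset.Subset.refl _

lemma aux_rrState_B_mono {s s' : ℕ} (h : s ≤ s') (a : Fin n) :
    (rrState n hn pref s).2 a ⊆ (rrState n hn pref s').2 a := by
  induction s' with
  | zero => have : s = 0 := by omega
            subst this; exact Finset.Subset.refl _
  | succ s' ih =>
    rcases Nat.lt_or_ge s (s' + 1) with h' | h'
    · refine (ih (by omega)).trans ?_
      rcases hfind : (pref ⟨s' % n, Nat.mod_lt s' hn⟩).find?
          (fun g => decide (g ∈ (rrState n hn pref s').1)) with _ | g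
      · rw [aux_rrState_succ_none hn pref hfind]
      · rw [aux_rrState_succ_some hn pref hfind]
        simp only
        by_cases ha : a = ⟨s' % n, Nat.mod_lt s' hn⟩
        · subst ha; rw [Function.update_self]; exact Finset.subset_insert _ _
        · rw [Function.update_of_ne ha]
    · have : s = s' + 1 := by omega
      subst this; exact Finset.Subset.refl _

end RRLemmas
section PickCount

/-- number of stages `i < j` in which agent with index `r` picks (round robin mod `n`) -/
def auxPc (n j r : ℕ) : ℕ := ((Finset.range j).filter (fun i => i % n = r)).card

lemma auxPc_zero (n r : ℕ) : auxPc n 0 r = 0 := by simp [auxPc]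

lemma auxPc_succ (n j r : ℕ) :
    auxPc n (j + 1) r = auxPc n j r + if j % n = r then 1 else 0 := by
  unfold auxPc
  rw [Finset.range_add_one, Finset.filter_insert]
  split_ifs with h
  · rw [Finset.card_insert_of_notMem (by simp)]
  · rfl

lemma auxPc_closed {n : ℕ} (hn : 0 < n) {r : ℕ} (hr : r < n) (j : ℕ) :
    auxPc n j r = j / n + if r < j % n then 1 else 0 := by
  induction j with
  | zero => simp [auxPc_zero]
  | succ j ih =>
    rw [auxPc_succ, ih]
    have hd := Nat.div_add_mod j n
    have hm := Nat.mod_lt j hn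
    rcases Nat.lt_or_ge (j % n + 1) n with hc | hc
    · have h1 : (j + 1) / n = j / n ∧ (j + 1) % n = j % n + 1 :=
        (Nat.div_mod_unique hn).mpr ⟨by omega, hc⟩
      rw [h1.1, h1.2]
      split_ifs <;> omega
    · have hmn : j % n + 1 = n := by omega
      have hmul : n * (j / n + 1) = n * (j / n) + n := by ring
      have h1 : (j + 1) / n = j / n + 1 ∧ (j + 1) % n = 0 :=
        (Nat.div_mod_unique hn).mpr ⟨by omega, hn⟩
      rw [h1.1, h1.2]
      split_ifs <;> omega

lemma auxPc_mul {n : ℕ} (hn : 0 < n) {r : ℕ} (hr : r < n) (M : ℕ) :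
    auxPc n (n * M) r = M := by
  rw [auxPc_closed hn hr, Nat.mul_div_cancel_left _ hn, Nat.mul_mod_right]
  simp

end PickCount
section Block

lemma aux_block {n m T : ℕ} (hn : 0 < n) (pref : Fin n → List (Fin m))
    (horder : ∀ a, IsOrder (pref a))
    (q0 : ℕ) (c : Fin m → ℕ) (gA : Fin n → Fin m) (M : ℕ)
    (hR : (rrState n hn (fun b => liftList T (pref b)) (n * q0)).1 =
      Finset.univ.filter (fun p : Fin m × Fin T => c p.1 ≤ (p.2 : ℕ)))
    (h1 : ∀ a g', (pref a).idxOf g' < (pref a).idxOf (gA a) → T ≤ c g')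
    (h2 : ∀ g : Fin m, c g + (Finset.univ.filter (fun a => gA a = g)).card * M ≤ T) :
    ((rrState n hn (fun b => liftList T (pref b)) (n * q0 + n * M)).1 =
      Finset.univ.filter (fun p : Fin m × Fin T =>
        c p.1 + (Finset.univ.filter (fun a => gA a = p.1)).card * M ≤ (p.2 : ℕ))) ∧
    ∀ a : Fin n,
      ((rrState n hn (fun b => liftList T (pref b)) (n * q0 + n * M)).2 a \
        (rrState n hn (fun b => liftList T (pref b)) (n * q0)).2 a).card = M ∧
      ∀ p ∈ (rrState n hn (fun b => liftList T (pref b)) (n * q0 + n * M)).2 a \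
          (rrState n hn (fun b => liftList T (pref b)) (n * q0)).2 a, p.1 = gA a := by
  set pref' : Fin n → List (Fin m × Fin T) := fun b => liftList T (pref b) with hpref'
  set f : ℕ → Fin m → ℕ := fun j g =>
    c g + ∑ b ∈ Finset.univ.filter (fun a => gA a = g), auxPc n j (b : ℕ) with hf
  -- increment of f
  have hf_succ : ∀ (j : ℕ) (a : Fin n), (a : ℕ) = j % n →
      ∀ g, f (j + 1) g = f j g + if gA a = g then 1 else 0 := by
    intro j a ha g
    simp only [hf]
    have hsum : ∀ b ∈ Finset.univ.filter (fun a' => gA a' = g),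
        auxPc n (j + 1) (b : ℕ) = auxPc n j (b : ℕ) + if b = a then 1 else 0 := by
      intro b _
      rw [auxPc_succ]
      congr 1
      by_cases hba : b = a
      · subst hba; rw [if_pos rfl, if_pos (by omega)]
      · rw [if_neg hba, if_neg (fun h => hba (Fin.ext (by omega)))]
    rw [Finset.sum_congr rfl hsum, Finset.sum_add_distrib, Finset.sum_ite_eq' _ a (fun _ => 1)]
    simp only [Finset.mem_filter, Finset.mem_univ, true_and]
    ring
  -- the main induction
  have main : ∀ j, j ≤ n * M →
      ((rrState n hn pref' (n * q0 + j)).1 =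
        Finset.univ.filter (fun p : Fin m × Fin T => f j p.1 ≤ (p.2 : ℕ))) ∧
      ∀ a : Fin n,
        ((rrState n hn pref' (n * q0 + j)).2 a \ (rrState n hn pref' (n * q0)).2 a).card
            = auxPc n j (a : ℕ) ∧
        ∀ p ∈ (rrState n hn pref' (n * q0 + j)).2 a \ (rrState n hn pref' (n * q0)).2 a,
          p.1 = gA a := by
    intro j
    induction j with
    | zero =>
      intro _
      refine ⟨?_, ?_⟩
      · simpa [hf, auxPc_zero] using hR
      · intro a
        simp [auxPc_zero]
    | succ j ih =>
      intro hj
      obtain ⟨ihR, ihB⟩ := ih (by omega)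
      have hMn : n * M = M * n := Nat.mul_comm n M
      -- the agent picking at stage n*q0+j
      set a : Fin n := ⟨j % n, Nat.mod_lt j hn⟩ with hadef
      have hagent : (⟨(n * q0 + j) % n, Nat.mod_lt (n * q0 + j) hn⟩ : Fin n) = a := by
        apply Fin.ext
        simp [hadef, Nat.mul_add_mod]
      have haval : (a : ℕ) = j % n := rfl
      -- key bound : f j (gA a) < T
      have hja : a ∈ Finset.univ.filter (fun a' => gA a' = gA a) := by
        simp
      have hcard : ∀ b : Fin n, auxPc n j (b : ℕ) ≤ M := by
        intro b
        rw [auxPc_closed hn b.2]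
        have : j / n < M := (Nat.div_lt_iff_lt_mul hn).mpr (by omega)
        split_ifs <;> omega
      have hlt : f j (gA a) < T := by
        have hstrict : auxPc n j (a : ℕ) < M := by
          rw [auxPc_closed hn a.2, haval]
          have : j / n < M := (Nat.div_lt_iff_lt_mul hn).mpr (by omega)
          simp only [lt_self_iff_false, if_false]
          omega
        have hsum : ∑ b ∈ Finset.univ.filter (fun a' => gA a' = gA a), auxPc n j (b : ℕ)
            < (Finset.univ.filter (fun a' => gA a' = gA a)).card * M := by
          have := Finset.sum_lt_sum (f := fun b : Fin n => auxPc n j (b : ℕ))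
            (g := fun _ : Fin n => M) (s := Finset.univ.filter (fun a' => gA a' = gA a))
            (fun b _ => hcard b) ⟨a, hja, hstrict⟩
          simpa [Finset.sum_const, mul_comm] using this
        have := h2 (gA a)
        simp only [hf]
        omega
      -- computing the pick
      have hpred : (fun p : Fin m × Fin T => decide (p ∈ (rrState n hn pref' (n * q0 + j)).1)) =
          fun p : Fin m × Fin T => decide (f j p.1 ≤ (p.2 : ℕ)) := by
        funext p
        rw [decide_eq_decide, ihR]
        simp
      have hfind : (pref' a).find?
          (fun p => decide (p ∈ (rrState n hn pref' (n * q0 + j)).1)) =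
          some (gA a, ⟨f j (gA a), hlt⟩) := by
        rw [hpred, hpref']
        apply aux_find?_lift
        · exact (horder a).2 (gA a)
        · intro g' hg' hidx
          calc T ≤ c g' := h1 a g' hidx
          _ ≤ f j g' := Nat.le_add_right _ _
      have hstep := aux_rrState_succ_some hn pref' (s := n * q0 + j)
        (g := (gA a, ⟨f j (gA a), hlt⟩)) (by rw [hagent]; exact hfind)
      have hstep1 : (rrState n hn pref' (n * q0 + (j + 1))).1 =
          ((rrState n hn pref' (n * q0 + j)).1).erase (gA a, ⟨f j (gA a), hlt⟩) := by
        rw [show n * q0 + (j + 1) = (n * q0 + j) + 1 by ring, hstep]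
      have hstep2 : (rrState n hn pref' (n * q0 + (j + 1))).2 =
          Function.update (rrState n hn pref' (n * q0 + j)).2 a
            (insert (gA a, ⟨f j (gA a), hlt⟩) ((rrState n hn pref' (n * q0 + j)).2 a)) := by
        rw [show n * q0 + (j + 1) = (n * q0 + j) + 1 by ring, hstep, hagent]
      refine ⟨?_, ?_⟩
      · -- remaining set
        rw [hstep1, ihR]
        ext p
        simp only [Finset.mem_erase, Finset.mem_filter, Finset.mem_univ, true_and,
          hf_succ j a haval p.1]
        constructor
        · rintro ⟨hne, hle⟩
          by_cases hp1 : gA a = p.1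
          · rw [if_pos hp1]
            have : ¬((p.2 : ℕ) = f j p.1) := by
              intro hval
              apply hne
              have : p = (p.1, p.2) := rfl
              rw [this]
              rw [Prod.mk.injEq]
              exact ⟨hp1.symm, by apply Fin.ext; simp [hval, hp1]⟩
            omega
          · rw [if_neg hp1]; omega
        · intro hle
          by_cases hp1 : gA a = p.1
          · rw [if_pos hp1] at hle
            refine ⟨?_, by omega⟩
            intro heq
            rw [heq] at hle
            simp only at hle
            omega
          · rw [if_neg hp1] at hle
            refine ⟨?_, by omega⟩
            intro heq
            apply hp1
            rw [heq]
        -- bundles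
      · intro b
        obtain ⟨ihc, ihm⟩ := ihB b
        by_cases hba : b = a
        · subst hba
          have hBb : (rrState n hn pref' (n * q0 + (j + 1))).2 a =
              insert (gA a, ⟨f j (gA a), hlt⟩) ((rrState n hn pref' (n * q0 + j)).2 a) := by
            rw [hstep2, Function.update_self]
          have hpR : (gA a, (⟨f j (gA a), hlt⟩ : Fin T)) ∈ (rrState n hn pref' (n * q0 + j)).1 := by
            rw [ihR]; simp
          have hpnB : (gA a, (⟨f j (gA a), hlt⟩ : Fin T)) ∉ (rrState n hn pref' (n * q0 + j)).2 a :=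
            fun hmem => (Finset.disjoint_left.mp (aux_rrState_disjoint hn pref' _ a) hmem) hpR
          have hpnB0 : (gA a, (⟨f j (gA a), hlt⟩ : Fin T)) ∉ (rrState n hn pref' (n * q0)).2 a :=
            fun hmem => hpnB (aux_rrState_B_mono hn pref' (Nat.le_add_right _ _) a hmem)
          rw [hBb, Finset.insert_sdiff_of_notMem _ hpnB0]
          constructor
          · rw [Finset.card_insert_of_notMem (fun hmem => hpnB (Finset.mem_sdiff.mp hmem).1),
              ihc, auxPc_succ, haval, if_pos rfl]
          · intro p hp
            rcases Finset.mem_insert.mp hp with rfl | hp'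
            · rfl
            · exact ihm p hp'
        · have hBb : (rrState n hn pref' (n * q0 + (j + 1))).2 b =
              (rrState n hn pref' (n * q0 + j)).2 b := by
            rw [hstep2, Function.update_of_ne hba]
          rw [hBb]
          refine ⟨?_, ihm⟩
          rw [ihc, auxPc_succ, if_neg (fun h => hba (Fin.ext (by rw [haval]; omega)))]
          omega
      -- end induction
  obtain ⟨hRfin, hBfin⟩ := main (n * M) (le_refl _)
  have hffin : ∀ g, f (n * M) g = c g + (Finset.univ.filter (fun a => gA a = g)).card * M := by
    intro g
    simp only [hf]
    congr 1
    rw [Finset.sum_congr rfl (fun b _ => auxPc_mul hn b.2 M), Finset.sum_const, smul_eq_mul]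
  constructor
  · rw [hRfin]
    ext p
    simp [hffin p.1]
  · intro a
    obtain ⟨h1', h2'⟩ := hBfin a
    exact ⟨by rw [h1', auxPc_mul hn a.2], h2'⟩

end Block
section PS
open scoped Classical

variable {n m : ℕ} (pref : Fin n → List (Fin m))

/-- eating speed denominators -/
noncomputable def auxTg (pref : Fin n → List (Fin m)) (S : Finset (Fin m))
    (x : Fin n → Fin m → ℝ) : Fin m → ℝ :=
  fun g => (1 - ∑ a, x a g) / ((psN pref S g).card : ℝ)

lemma aux_psState_succ (k : ℕ) (h : (psActive pref (psState pref k).1).Nonempty) :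
    psState pref (k + 1) =
      ((psState pref k).1.filter (fun g => ¬(g ∈ psActive pref (psState pref k).1 ∧
          auxTg pref (psState pref k).1 (psState pref k).2.1 g =
            (psActive pref (psState pref k).1).inf' h
              (auxTg pref (psState pref k).1 (psState pref k).2.1))),
        fun a g => if psTop pref (psState pref k).1 a = some g then
            (psState pref k).2.1 a g +
              (psActive pref (psState pref k).1).inf' h
                (auxTg pref (psState pref k).1 (psState pref k).2.1)
          else (psState pref k).2.1 a g,
        (psActive pref (psState pref k).1).inf' h
          (auxTg pref (psState pref k).1 (psState pref k).2.1)) := by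
  conv_lhs => rw [psState]
  simp only [auxTg]
  rw [dif_pos h]
  rfl

end PS
lemma aux_psTop_mem {n m : ℕ} {pref : Fin n → List (Fin m)} {S : Finset (Fin m)}
    {a : Fin n} {g : Fin m} (h : psTop pref S a = some g) : g ∈ S := by
  have := List.find?_some h
  simpa using this

lemma aux_psTop_exists {n m : ℕ} {pref : Fin n → List (Fin m)}
    (horder : ∀ a, IsOrder (pref a)) {S : Finset (Fin m)} (hS : S.Nonempty) (a : Fin n) :
    ∃ g, psTop pref S a = some g := by
  obtain ⟨g0, hg0⟩ := hS
  have : (List.find? (fun g => decide (g ∈ S)) (pref a)).isSome :=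
    List.find?_isSome.mpr ⟨g0, (horder a).2 g0, by simpa using hg0⟩
  exact Option.isSome_iff_exists.mp this

lemma aux_psActive_nonempty {n m : ℕ} {pref : Fin n → List (Fin m)} (hn : 0 < n)
    (horder : ∀ a, IsOrder (pref a)) {S : Finset (Fin m)} (hS : S.Nonempty) :
    (psActive pref S).Nonempty := by
  obtain ⟨g, hg⟩ := aux_psTop_exists horder hS ⟨0, hn⟩
  refine ⟨g, ?_⟩
  rw [psActive, Finset.mem_filter]
  exact ⟨aux_psTop_mem hg, ⟨⟨0, hn⟩, by simp [psN, hg]⟩⟩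

/-- number of copies of `g` consumed after `k` steps of PS, in the lifted instance -/
noncomputable def auxCnt {n m : ℕ} (pref : Fin n → List (Fin m)) (τ : ℕ → ℕ) (k : ℕ) (g : Fin m) : ℕ :=
  ∑ i ∈ Finset.range k, (psN pref (psState pref i).1 g).card * τ (i + 1)

lemma aux_psX_sum {n m : ℕ} (pref : Fin n → List (Fin m)) (k : ℕ)
    (h : (psActive pref (psState pref k).1).Nonempty) (g : Fin m) :
    ∑ a, (psState pref (k + 1)).2.1 a g =
      ∑ a, (psState pref k).2.1 a g + (psN pref (psState pref k).1 g).card *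
        (psState pref (k + 1)).2.2 := by
  rw [aux_psState_succ pref k h]
  simp only
  have : ∀ a : Fin n, (if psTop pref (psState pref k).1 a = some g then
      (psState pref k).2.1 a g + (psActive pref (psState pref k).1).inf' h
        (auxTg pref (psState pref k).1 (psState pref k).2.1)
      else (psState pref k).2.1 a g) =
      (psState pref k).2.1 a g + (if psTop pref (psState pref k).1 a = some g then
        (psActive pref (psState pref k).1).inf' h
          (auxTg pref (psState pref k).1 (psState pref k).2.1) else 0) := by
    intro a; split_ifs <;> simp
  rw [Finset.sum_congr rfl (fun a _ => this a), Finset.sum_add_distrib]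
  congr 1
  rw [← Finset.sum_filter, Finset.sum_const, nsmul_eq_mul, psN]

lemma aux_psInv {n m : ℕ} (pref : Fin n → List (Fin m)) (hn : 0 < n)
    (horder : ∀ a, IsOrder (pref a)) (K : ℕ)
    (hK' : ∀ k < K, (psState pref k).1 ≠ ∅)
    (τ : ℕ → ℕ) (hτ : ∀ k, (τ k : ℝ) = ((n.factorial : ℝ) ^ m) * (psState pref k).2.2) :
    ∀ k, k ≤ K → ∀ g : Fin m,
      ((auxCnt pref τ k g : ℝ) = ((n.factorial : ℝ) ^ m) * ∑ a, (psState pref k).2.1 a g)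
      ∧ (g ∈ (psState pref k).1 → ∑ a, (psState pref k).2.1 a g < 1)
      ∧ (g ∉ (psState pref k).1 → ∑ a, (psState pref k).2.1 a g = 1) := by
  intro k
  induction k with
  | zero =>
    intro _ g
    refine ⟨by simp [auxCnt, psState], ?_, ?_⟩
    · intro _; simp [psState]
    · intro hg; exact absurd (Finset.mem_univ g) (by simpa [psState] using hg)
  | succ k ih =>
    intro hk g
    have hkK : k < K := by omega
    have ihs := ih (by omega)
    have hSne : ((psState pref k).1).Nonempty :=
      Finset.nonempty_iff_ne_empty.mpr (hK' k hkK)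
    have hact : (psActive pref (psState pref k).1).Nonempty :=
      aux_psActive_nonempty hn horder hSne
    set S := (psState pref k).1 with hSdef
    set x := (psState pref k).2.1 with hxdef
    set tg := auxTg pref S x with htgdef
    set t := (psActive pref S).inf' hact tg with htdef
    have ht_succ : (psState pref (k + 1)).2.2 = t := by
      rw [aux_psState_succ pref k hact]
    have hmem_succ : ∀ g' : Fin m, g' ∈ (psState pref (k + 1)).1 ↔
        (g' ∈ S ∧ ¬(g' ∈ psActive pref S ∧ tg g' = t)) := by
      intro g'
      rw [aux_psState_succ pref k hact, Finset.mem_filter]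
    have hsum := aux_psX_sum pref k hact g
    rw [ht_succ] at hsum
    -- positivity of remaining share on S
    have hr_pos : ∀ g' ∈ S, (0:ℝ) < 1 - ∑ a, x a g' := by
      intro g' hg'
      have := (ihs g').2.1 hg'
      linarith
    -- tg positive on active goods
    have hNpos : ∀ g' ∈ psActive pref S, 0 < ((psN pref S g').card : ℝ) := by
      intro g' hg'
      rw [psActive, Finset.mem_filter] at hg'
      have := Finset.card_pos.mpr hg'.2
      exact_mod_cast this
    have htg_pos : ∀ g' ∈ psActive pref S, 0 < tg g' := by
      intro g' hg'
      have hg'S : g' ∈ S := by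
        rw [psActive, Finset.mem_filter] at hg'; exact hg'.1
      exact div_pos (hr_pos g' hg'S) (hNpos g' hg')
    have ht_le : ∀ g' ∈ psActive pref S, t ≤ tg g' := fun g' hg' =>
      Finset.inf'_le _ hg'
    -- N empty for goods outside S
    have hN_empty : ∀ g', g' ∉ S → psN pref S g' = ∅ := by
      intro g' hg'
      rw [Finset.eq_empty_iff_forall_notMem]
      intro a ha
      rw [psN, Finset.mem_filter] at ha
      exact hg' (aux_psTop_mem ha.2)
    -- goods in S with nonempty N are active
    have hactive_of_N : ∀ g' ∈ S, (psN pref S g').Nonempty → g' ∈ psActive pref S := by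
      intro g' hg' hN
      rw [psActive, Finset.mem_filter]
      exact ⟨hg', hN⟩
    refine ⟨?_, ?_, ?_⟩
    · -- count identity
      have hrec : auxCnt pref τ (k + 1) g =
          auxCnt pref τ k g + (psN pref S g).card * τ (k + 1) := by
        rw [auxCnt, Finset.sum_range_succ]; rfl
      rw [hrec, hsum]
      push_cast
      rw [(ihs g).1, hτ (k + 1), ht_succ]
      ring
    · -- strict bound for goods remaining in S
      intro hgmem
      rw [hsum]
      rw [hmem_succ g] at hgmem
      obtain ⟨hgS, hgn⟩ := hgmem
      rcases Finset.eq_empty_or_nonempty (psN pref S g) with hN | hN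
      · rw [hN]
        simpa using (ihs g).2.1 hgS
      · have hgact : g ∈ psActive pref S := hactive_of_N g hgS hN
        have htne : tg g ≠ t := fun he => hgn ⟨hgact, he⟩
        have htlt : t < tg g := lt_of_le_of_ne (ht_le g hgact) (Ne.symm htne)
        have hNp := hNpos g hgact
        have : ((psN pref S g).card : ℝ) * t < 1 - ∑ a, x a g := by
          have h1 : ((psN pref S g).card : ℝ) * t < ((psN pref S g).card : ℝ) * tg g :=
            mul_lt_mul_of_pos_left htlt hNp
          have hne : ((psN pref S g).card : ℝ) ≠ 0 := ne_of_gt hNp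
          have h2 : ((psN pref S g).card : ℝ) * tg g = 1 - ∑ a, x a g := by
            simp only [htgdef, auxTg]
            rw [mul_comm, div_mul_cancel₀ _ hne]
          linarith
        linarith
    · -- goods fully consumed
      intro hgout
      rw [hsum]
      rw [hmem_succ g] at hgout
      push_neg at hgout
      by_cases hgS : g ∈ S
      · obtain ⟨hgact, htge⟩ := hgout hgS
        have hne : ((psN pref S g).card : ℝ) ≠ 0 := ne_of_gt (hNpos g hgact)
        have h2 : ((psN pref S g).card : ℝ) * tg g = 1 - ∑ a, x a g := by
          simp only [htgdef, auxTg]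
          rw [mul_comm, div_mul_cancel₀ _ hne]
        rw [htge] at h2
        linarith
      · rw [hN_empty g hgS]
        simpa using (ihs g).2.2 hgS
lemma aux_cnt_facts {n m : ℕ} (pref : Fin n → List (Fin m)) (hn : 0 < n)
    (horder : ∀ a, IsOrder (pref a)) (K : ℕ)
    (hK' : ∀ k < K, (psState pref k).1 ≠ ∅)
    (τ : ℕ → ℕ) (hτ : ∀ k, (τ k : ℝ) = ((n.factorial : ℝ) ^ m) * (psState pref k).2.2)
    (k : ℕ) (hk : k ≤ K) (g : Fin m) :
    (g ∈ (psState pref k).1 → auxCnt pref τ k g < n.factorial ^ m) ∧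
    (g ∉ (psState pref k).1 → auxCnt pref τ k g = n.factorial ^ m) := by
  obtain ⟨h1, h2, h3⟩ := aux_psInv pref hn horder K hK' τ hτ k hk g
  have hTpos : (0:ℝ) < ((n.factorial : ℝ) ^ m) := by
    positivity
  have hcast : ((n.factorial ^ m : ℕ) : ℝ) = ((n.factorial : ℝ) ^ m) := by push_cast; ring
  constructor
  · intro hg
    have : (auxCnt pref τ k g : ℝ) < ((n.factorial : ℝ) ^ m) := by
      rw [h1]
      nlinarith [h2 hg]
    rw [← hcast] at this
    exact_mod_cast this
  · intro hg
    have : (auxCnt pref τ k g : ℝ) = ((n.factorial ^ m : ℕ) : ℝ) := by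
      rw [h1, h3 hg, hcast]; ring
    exact_mod_cast this

lemma aux_key2 {n m : ℕ} (pref : Fin n → List (Fin m)) (hn : 0 < n)
    (horder : ∀ a, IsOrder (pref a)) (K : ℕ)
    (hK' : ∀ k < K, (psState pref k).1 ≠ ∅)
    (τ : ℕ → ℕ) (hτ : ∀ k, (τ k : ℝ) = ((n.factorial : ℝ) ^ m) * (psState pref k).2.2)
    (k : ℕ) (hk : k < K) (g : Fin m) :
    auxCnt pref τ k g + (psN pref (psState pref k).1 g).card * τ (k + 1) ≤
      n.factorial ^ m := by
  obtain ⟨h1, h2, h3⟩ := aux_psInv pref hn horder K hK' τ hτ k (by omega) g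
  have hTpos : (0:ℝ) < ((n.factorial : ℝ) ^ m) := by positivity
  have hcast : ((n.factorial ^ m : ℕ) : ℝ) = ((n.factorial : ℝ) ^ m) := by push_cast; ring
  have hSne : ((psState pref k).1).Nonempty := Finset.nonempty_iff_ne_empty.mpr (hK' k hk)
  have hact : (psActive pref (psState pref k).1).Nonempty :=
    aux_psActive_nonempty hn horder hSne
  have ht_succ : (psState pref (k + 1)).2.2 =
      (psActive pref (psState pref k).1).inf' hact
        (auxTg pref (psState pref k).1 (psState pref k).2.1) := by
    rw [aux_psState_succ pref k hact]
  set S := (psState pref k).1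
  set x := (psState pref k).2.1
  set t := (psState pref (k + 1)).2.2 with htdef
  -- enough to prove the real inequality
  suffices hreal : (auxCnt pref τ k g : ℝ) + ((psN pref S g).card : ℝ) * (τ (k + 1) : ℝ) ≤
      ((n.factorial ^ m : ℕ) : ℝ) by
    have := hreal
    push_cast at this
    exact_mod_cast hreal
  rw [hcast, h1, hτ (k + 1)]
  by_cases hgS : g ∈ S
  · rcases Finset.eq_empty_or_nonempty (psN pref S g) with hN | hN
    · rw [hN]
      simp only [Finset.card_empty, Nat.cast_zero, zero_mul, add_zero]
      nlinarith [h2 hgS]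
    · have hgact : g ∈ psActive pref S := by
        rw [psActive, Finset.mem_filter]; exact ⟨hgS, hN⟩
      have hNp : (0:ℝ) < ((psN pref S g).card : ℝ) := by
        exact_mod_cast Finset.card_pos.mpr hN
      have ht_le : t ≤ auxTg pref S x g := by
        rw [ht_succ]
        exact Finset.inf'_le _ hgact
      have heq : ((psN pref S g).card : ℝ) * auxTg pref S x g = 1 - ∑ a, x a g := by
        simp only [auxTg]
        rw [mul_comm, div_mul_cancel₀ _ (ne_of_gt hNp)]
      have hb : ((psN pref S g).card : ℝ) * t ≤ 1 - ∑ a, x a g := by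
        calc ((psN pref S g).card : ℝ) * t ≤ ((psN pref S g).card : ℝ) * auxTg pref S x g :=
              mul_le_mul_of_nonneg_left ht_le (le_of_lt hNp)
          _ = 1 - ∑ a, x a g := heq
      nlinarith
  · have hN : psN pref S g = ∅ := by
      rw [Finset.eq_empty_iff_forall_notMem]
      intro a ha
      rw [psN, Finset.mem_filter] at ha
      exact hgS (aux_psTop_mem ha.2)
    rw [hN, h3 hgS]
    simp

lemma aux_step {n m : ℕ} (pref : Fin n → List (Fin m)) (hn : 0 < n)
    (horder : ∀ a, IsOrder (pref a)) (K : ℕ)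
    (hK' : ∀ k < K, (psState pref k).1 ≠ ∅)
    (τ : ℕ → ℕ) (hτ : ∀ k, (τ k : ℝ) = ((n.factorial : ℝ) ^ m) * (psState pref k).2.2)
    (k : ℕ) (hk : k < K)
    (hInv : (rrState n hn (fun b => liftList (n.factorial ^ m) (pref b))
        (n * ∑ i ∈ Finset.range (k + 1), τ i)).1 =
      Finset.univ.filter (fun p : Fin m × Fin (n.factorial ^ m) =>
        auxCnt pref τ k p.1 ≤ (p.2 : ℕ))) :
    ((rrState n hn (fun b => liftList (n.factorial ^ m) (pref b))
        (n * ∑ i ∈ Finset.range (k + 2), τ i)).1 =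
      Finset.univ.filter (fun p : Fin m × Fin (n.factorial ^ m) =>
        auxCnt pref τ (k + 1) p.1 ≤ (p.2 : ℕ))) ∧
    ∀ a : Fin n, ∀ gka : Fin m, psTop pref (psState pref k).1 a = some gka →
      (((rrState n hn (fun b => liftList (n.factorial ^ m) (pref b))
            (n * ∑ i ∈ Finset.range (k + 2), τ i)).2 a \
          (rrState n hn (fun b => liftList (n.factorial ^ m) (pref b))
            (n * ∑ i ∈ Finset.range (k + 1), τ i)).2 a).card = τ (k + 1)) ∧
      ∀ p ∈ (rrState n hn (fun b => liftList (n.factorial ^ m) (pref b))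
            (n * ∑ i ∈ Finset.range (k + 2), τ i)).2 a \
          (rrState n hn (fun b => liftList (n.factorial ^ m) (pref b))
            (n * ∑ i ∈ Finset.range (k + 1), τ i)).2 a,
        p.1 = gka := by
  have hSne : ((psState pref k).1).Nonempty := Finset.nonempty_iff_ne_empty.mpr (hK' k hk)
  choose gA hgA using aux_psTop_exists horder hSne
  have hNg : ∀ g : Fin m, psN pref (psState pref k).1 g =
      Finset.univ.filter (fun a => gA a = g) := by
    intro g
    ext a
    simp only [psN, Finset.mem_filter, Finset.mem_univ, true_and, hgA a,
      Option.some_inj]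
  have hfacts := aux_cnt_facts pref hn horder K hK' τ hτ k (by omega)
  have hblock := aux_block hn pref horder (∑ i ∈ Finset.range (k + 1), τ i)
    (auxCnt pref τ k) gA (τ (k + 1)) hInv
    (by
      intro a g' hidx
      have hfalse := aux_find?_before (hgA a) g' hidx
      have : g' ∉ (psState pref k).1 := by
        intro hmem
        rw [decide_eq_false_iff_not] at hfalse
        exact hfalse hmem
      exact le_of_eq ((hfacts g').2 this).symm)
    (by
      intro g
      rw [← hNg g]
      exact aux_key2 pref hn horder K hK' τ hτ k hk g)
  have hsum : n * ∑ i ∈ Finset.range (k + 1), τ i + n * τ (k + 1) =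
      n * ∑ i ∈ Finset.range (k + 2), τ i := by
    rw [Finset.sum_range_succ (n := k + 1)]
    ring
  rw [hsum] at hblock
  obtain ⟨hbR, hbB⟩ := hblock
  constructor
  · rw [hbR]
    ext p
    simp only [Finset.mem_filter, Finset.mem_univ, true_and]
    have : auxCnt pref τ (k + 1) p.1 =
        auxCnt pref τ k p.1 + (Finset.univ.filter (fun a => gA a = p.1)).card * τ (k + 1) := by
      rw [auxCnt, Finset.sum_range_succ, ← hNg p.1]
      rfl
    rw [this]
  · intro a gka hgka
    have hgeq : gA a = gka := by
      have h' := (hgA a).symm.trans hgka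
      exact Option.some_inj.mp h'
    obtain ⟨hc, hm⟩ := hbB a
    exact ⟨hc, fun p hp => by rw [← hgeq]; exact hm p hp⟩
/-- coupling lemma.  During step `k` of Round-Robin on the lifted
instance (the rounds `T·Σ_{i<k} t⁽ⁱ⁾ + 1` through `T·Σ_{i≤k} t⁽ⁱ⁾`, each round
being `n` consecutive picks), agent `a` picks exactly `T·t⁽ᵏ⁾` goods, all of
which are copies of the good `g_{k,a}` he eats during step `k` of PS. -/
theorem stmt13 (n m : ℕ) (hn : 0 < n) (pref : Fin n → List (Fin m))
    (horder : ∀ a, IsOrder (pref a))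
    (K : ℕ) (hK : (psState pref K).1 = ∅)
    (hK' : ∀ k < K, (psState pref k).1 ≠ ∅)
    (τ : ℕ → ℕ)
    (hτ : ∀ k, (τ k : ℝ) = ((n.factorial : ℝ) ^ m) * (psState pref k).2.2) :
    ∀ (a : Fin n) (k : ℕ), 1 ≤ k → k ≤ K →
      ∀ gka : Fin m, psTop pref (psState pref (k - 1)).1 a = some gka →
        (((rrState n hn (fun b => liftList (n.factorial ^ m) (pref b))
              (n * ∑ i ∈ Finset.range (k + 1), τ i)).2 a \
            (rrState n hn (fun b => liftList (n.factorial ^ m) (pref b))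
              (n * ∑ i ∈ Finset.range k, τ i)).2 a).card = τ k) ∧
          ∀ q ∈ (rrState n hn (fun b => liftList (n.factorial ^ m) (pref b))
                (n * ∑ i ∈ Finset.range (k + 1), τ i)).2 a \
              (rrState n hn (fun b => liftList (n.factorial ^ m) (pref b))
                (n * ∑ i ∈ Finset.range k, τ i)).2 a,
            q.1 = gka := by
  intro a k hk1 hkK gka hgka
  have hτ0 : τ 0 = 0 := by
    have h := hτ 0
    have h0 : (psState pref 0).2.2 = 0 := rfl
    rw [h0, mul_zero] at h
    exact_mod_cast h
  have hInv : ∀ k', k' ≤ K →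
      (rrState n hn (fun b => liftList (n.factorial ^ m) (pref b))
        (n * ∑ i ∈ Finset.range (k' + 1), τ i)).1 =
      Finset.univ.filter (fun p : Fin m × Fin (n.factorial ^ m) =>
        auxCnt pref τ k' p.1 ≤ (p.2 : ℕ)) := by
    intro k'
    induction k' with
    | zero =>
      intro _
      rw [Finset.sum_range_one, hτ0, Nat.mul_zero]
      ext p
      simp [rrState, auxCnt]
    | succ k' ih =>
      intro h
      exact (aux_step pref hn horder K hK' τ hτ k' (by omega) (ih (by omega))).1
  obtain ⟨k', rfl⟩ : ∃ k', k = k' + 1 := ⟨k - 1, by omega⟩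
  have hstep := aux_step pref hn horder K hK' τ hτ k' (by omega) (hInv k' (by omega))
  exact hstep.2 a gka (by simpa using hgka)
end
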